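/- Let an N-player potential game with N = 2k+1 odd (k ≥ 1) have strategy sets K_i ⊆ ℝ^{n_i} with 0 ∈ K and each K_i symmetric, and let φ be a potential function. Then for every z ∈ K, φ(z) = φ(0) + h_{P₃}(0, (z_1, z_2, z_3)) + Σ_{i=2}^{k} h_{2i,2i+1}(0, 0, z_{2i}, z_{2i+1}; ẑ_{2i−1}), where ẑ_m = (z_1, …, z_m, 0, …, 0), h_{P₃}(0, (z_1,z_2,z_3)) = [f_1(z_1, 0, …, 0) − f_1(0)] + [f_2(z_1, z_2, 0, …, 0) − f_2(z_1, 0, …, 0)] + [f_3(z_1, z_2, z_3, 0, …, 0) − f_3(z_1, z_2, 0, …, 0)], and h_{ij} is the pairwise incremental cost difference function. -/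

import Mathlib

noncomputable section

/-- The set of joint strategy profiles of a game with strategy sets `K i ⊆ ℝ^{n i}`. -/
def jointK {N : ℕ} {n : Fin N → ℕ}
    (K : ∀ i, Set (EuclideanSpace ℝ (Fin (n i)))) :
    Set (∀ i, EuclideanSpace ℝ (Fin (n i))) :=
  {x | ∀ i, x i ∈ K i}

/-- `φ` is an exact potential function for the game with strategy sets `K` and costs `f`. -/
def IsPotential {N : ℕ} {n : Fin N → ℕ}
    (K : ∀ i, Set (EuclideanSpace ℝ (Fin (n i))))
    (f : Fin N → (∀ i, EuclideanSpace ℝ (Fin (n i))) → ℝ)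
    (φ : (∀ i, EuclideanSpace ℝ (Fin (n i))) → ℝ) : Prop :=
  ∀ i : Fin N, ∀ x ∈ jointK K, ∀ xi' ∈ K i,
    f i (Function.update x i xi') - f i x = φ (Function.update x i xi') - φ x

/-- The game is a potential game. -/
def IsPotentialGame {N : ℕ} {n : Fin N → ℕ}
    (K : ∀ i, Set (EuclideanSpace ℝ (Fin (n i))))
    (f : Fin N → (∀ i, EuclideanSpace ℝ (Fin (n i))) → ℝ) : Prop :=
  ∃ φ, IsPotential K f φ

/-- `hij f i j z yi yj` : the pairwise incremental cost difference
`f_i(z_i+y_i, z_j; z₋) − f_i(z_i, z_j; z₋) + f_j(z_j+y_j, z_i+y_i; z₋) − f_j(z_j, z_i+y_i; z₋)`. -/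
def hij {N : ℕ} {n : Fin N → ℕ}
    (f : Fin N → (∀ k, EuclideanSpace ℝ (Fin (n k))) → ℝ)
    (i j : Fin N) (z : ∀ k, EuclideanSpace ℝ (Fin (n k)))
    (yi : EuclideanSpace ℝ (Fin (n i))) (yj : EuclideanSpace ℝ (Fin (n j))) : ℝ :=
  f i (Function.update z i (z i + yi)) - f i z
    + f j (Function.update (Function.update z i (z i + yi)) j (z j + yj))
    - f j (Function.update z i (z i + yi))

/-- `trunc z m` : the profile `ẑ_m = (z_1, …, z_m, 0, …, 0)`. -/
def trunc {N : ℕ} {n : Fin N → ℕ}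
    (z : ∀ k, EuclideanSpace ℝ (Fin (n k))) (m : ℕ) :
    ∀ k, EuclideanSpace ℝ (Fin (n k)) :=
  fun j => if (j : ℕ) < m then z j else 0

-- auxiliary lemma
private lemma sum_pairs_aux (d : ℕ → ℝ) (K : ℕ) :
    ∑ i ∈ Finset.Icc 2 K, (d (2*i-1) + d (2*i)) = ∑ m ∈ Finset.Ico 3 (2*K+1), d m := by
  induction K with
  | zero => simp
  | succ K ih =>
    rcases Nat.lt_or_ge K 1 with h | h
    · interval_cases K
      simp
    · rw [Finset.sum_Icc_succ_top (by omega : 2 ≤ K+1), ih,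
        show 2*(K+1)-1 = 2*K+1 by omega,
        show 2*(K+1)+1 = (2*K+2)+1 by ring,
        Finset.sum_Ico_succ_top (by omega : 3 ≤ 2*K+2),
        show 2*K+2 = (2*K+1)+1 by ring,
        Finset.sum_Ico_succ_top (by omega : 3 ≤ 2*K+1)]
      ring_nf


/-- In a potential game with an odd number `N = 2k+1` of players
(`k ≥ 1`), with `0 ∈ K` and symmetric strategy sets, every potential function `φ`
satisfies
`φ(z) = φ(0) + h_{P₃}(0,(z₁,z₂,z₃)) + ∑_{i=2}^{k} h_{2i,2i+1}(0,0,z_{2i},z_{2i+1};ẑ_{2i−1})`.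
(Players are `1`-indexed in the informal statement; here player `m` is index `m−1`.) -/
theorem stmt10 {N k : ℕ} {n : Fin N → ℕ} (hN : N = 2 * k + 1) (hk : 1 ≤ k)
    (K : ∀ i, Set (EuclideanSpace ℝ (Fin (n i))))
    (f : Fin N → (∀ i, EuclideanSpace ℝ (Fin (n i))) → ℝ)
    (h0 : (0 : ∀ i, EuclideanSpace ℝ (Fin (n i))) ∈ jointK K)
    (hsym : ∀ i, ∀ v ∈ K i, -v ∈ K i)
    (φ : (∀ i, EuclideanSpace ℝ (Fin (n i))) → ℝ)
    (hφ : IsPotential K f φ) :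
    ∀ z ∈ jointK K,
      φ z = φ 0
        + ((f ⟨0, by omega⟩ (trunc z 1) - f ⟨0, by omega⟩ (trunc z 0))
            + (f ⟨1, by omega⟩ (trunc z 2) - f ⟨1, by omega⟩ (trunc z 1))
            + (f ⟨2, by omega⟩ (trunc z 3) - f ⟨2, by omega⟩ (trunc z 2)))
        + ∑ i ∈ (Finset.Icc 2 k).attach,
            hij f ⟨2 * i.1 - 1, by have := Finset.mem_Icc.mp i.2; omega⟩
                  ⟨2 * i.1, by have := Finset.mem_Icc.mp i.2; omega⟩
                  (trunc z (2 * i.1 - 1))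
                  (z ⟨2 * i.1 - 1, by have := Finset.mem_Icc.mp i.2; omega⟩)
                  (z ⟨2 * i.1, by have := Finset.mem_Icc.mp i.2; omega⟩) := by
  subst hN
  intro z hz
  set d : ℕ → ℝ := fun m => φ (trunc z (m+1)) - φ (trunc z m) with hd
  have htm : ∀ m, trunc z m ∈ jointK K := by
    intro m j
    by_cases h : (j : ℕ) < m
    · simpa [trunc, h] using hz j
    · simpa [trunc, h] using h0 j
  have hupd : ∀ (m : ℕ) (hm : m < 2*k+1),
      Function.update (trunc z m) ⟨m, hm⟩ (z ⟨m, hm⟩) = trunc z (m+1) := by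
    intro m hm; funext l
    rcases eq_or_ne l ⟨m, hm⟩ with rfl | hl
    · simp [trunc]
    · rw [Function.update_of_ne hl]
      have hlm : (l : ℕ) ≠ m := fun h => hl (Fin.ext h)
      by_cases h2 : (l : ℕ) < m
      · simp [trunc, h2, Nat.lt_succ_of_lt h2]
      · simp [trunc, h2, show ¬ (l : ℕ) < m+1 by omega]
  have key : ∀ (m : ℕ) (hm : m < 2*k+1),
      f ⟨m, hm⟩ (trunc z (m+1)) - f ⟨m, hm⟩ (trunc z m) = d m := by
    intro m hm
    have h := hφ ⟨m, hm⟩ (trunc z m) (htm m) (z ⟨m, hm⟩) (hz _)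
    rw [hupd m hm] at h
    exact h
  have hij_eq : ∀ (i : ℕ) (h2 : 2 ≤ i) (hik : i ≤ k),
      hij f ⟨2*i-1, by omega⟩ ⟨2*i, by omega⟩ (trunc z (2*i-1))
        (z ⟨2*i-1, by omega⟩) (z ⟨2*i, by omega⟩) = d (2*i-1) + d (2*i) := by
    intro i h2 hik
    have ha : 2*i-1 < 2*k+1 := by omega
    have hb : 2*i < 2*k+1 := by omega
    have e1 : trunc z (2*i-1) ⟨2*i-1, ha⟩ = 0 := by simp [trunc]
    have e2 : trunc z (2*i-1) ⟨2*i, hb⟩ = 0 := by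
      simp [trunc, show ¬ 2*i < 2*i-1 by omega]
    have e3 : (2*i-1) + 1 = 2*i := by omega
    have k1 : f ⟨2*i-1, ha⟩ (trunc z (2*i)) - f ⟨2*i-1, ha⟩ (trunc z (2*i-1)) = d (2*i-1) := by
      have h := key (2*i-1) ha
      rwa [e3] at h
    have k2 := key (2*i) hb
    unfold hij
    rw [e1, e2, zero_add, zero_add, hupd (2*i-1) ha, e3, hupd (2*i) hb]
    linarith [k1, k2]
  have hattach : (∑ i ∈ (Finset.Icc 2 k).attach,
        hij f ⟨2 * i.1 - 1, by have := Finset.mem_Icc.mp i.2; omega⟩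
              ⟨2 * i.1, by have := Finset.mem_Icc.mp i.2; omega⟩
              (trunc z (2 * i.1 - 1))
              (z ⟨2 * i.1 - 1, by have := Finset.mem_Icc.mp i.2; omega⟩)
              (z ⟨2 * i.1, by have := Finset.mem_Icc.mp i.2; omega⟩))
      = ∑ i ∈ Finset.Icc 2 k, (d (2*i-1) + d (2*i)) := by
    rw [← Finset.sum_attach (Finset.Icc 2 k) (fun i => d (2*i-1) + d (2*i))]
    refine Finset.sum_congr rfl fun i _ => ?_
    obtain ⟨h2, hik⟩ := Finset.mem_Icc.mp i.2
    exact hij_eq i.1 h2 hik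
  have tele : ∑ m ∈ Finset.range (2*k+1), d m = φ z - φ 0 := by
    rw [hd, Finset.sum_range_sub (fun m => φ (trunc z m)),
      show trunc z (2*k+1) = z by funext j; simp [trunc, j.isLt],
      show trunc z 0 = (0 : ∀ i, EuclideanSpace ℝ (Fin (n i))) by funext j; simp [trunc]]
  have hsplit : ∑ m ∈ Finset.range (2*k+1), d m
      = (d 0 + d 1 + d 2) + ∑ m ∈ Finset.Ico 3 (2*k+1), d m := by
    rw [Finset.range_eq_Ico,
      ← Finset.sum_Ico_consecutive d (by omega : (0:ℕ) ≤ 3) (by omega : 3 ≤ 2*k+1)]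
    congr 1
    rw [← Finset.range_eq_Ico, Finset.sum_range_succ, Finset.sum_range_succ,
      Finset.sum_range_one]
  have k0 := key 0 (by omega)
  have k1 := key 1 (by omega)
  have k2 := key 2 (by omega)
  simp only [Nat.reduceAdd] at k0 k1 k2
  rw [hattach, sum_pairs_aux d k, k0, k1, k2]
  linarith [tele, hsplit]
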